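/- Let α, β ∈ (0,1) with α + β > 1. Let X : ℝ^d → ℝ^d be a bounded continuous vector field, and let φ : ℝ × ℝ^d → ℝ^d be a global flow of X satisfying the group property φ(t + s, p) = φ(t, φ(s, p)). Let μ be a Borel probability measure on ℝ^d invariant under φ(t, ·) for every t. Let f : ℝ^d → ℝ be bounded and α-Hölder with constant C_f, and g : ℝ^d → ℝ be bounded and β-Hölder with constant C_g, and define h(t) = ∫ f(x)·g(φ(t, x)) dμ(x). Then h is differentiable at every t ∈ ℝ and there is a constant C depending only on α and β such that |h′(t)| ≤ C · (sup_x ‖X(x)‖) · (sup|f| + C_f) · (sup|g| + C_g) for all t ∈ ℝ. -/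

import Mathlib

open MeasureTheory
open Filter Topology

lemma tendsto_abs_rpow_zero {γ : ℝ} (hγ : 0 < γ) :
    Tendsto (fun s : ℝ => |s| ^ γ) (𝓝 0) (𝓝 0) := by
  have h2 : Tendsto (fun x : ℝ => x ^ γ) (𝓝 0) (𝓝 0) := by
    have := Real.continuousAt_rpow_const 0 γ (Or.inr hγ.le)
    rwa [ContinuousAt, Real.zero_rpow hγ.ne'] at this
  have h1 : Tendsto (fun s : ℝ => |s|) (𝓝 0) (𝓝 (0:ℝ)) := by
    simpa using continuous_abs.tendsto (0:ℝ)
  exact h2.comp h1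

lemma approx_linear {α β K : ℝ} (hα : 0 < α) (hβ : 0 < β) (hαβ : 1 < α + β) (hK : 0 ≤ K)
    (a : ℝ → ℝ)
    (hadd : ∀ u v, |a (u + v) - a u - a v| ≤ K * |u| ^ α * |v| ^ β)
    (hcont : Tendsto a (𝓝 0) (𝓝 0)) :
    ∃ L : ℝ, ∀ s : ℝ, |a s - L * s| ≤ (1 - 2 ^ (1 - (α + β)))⁻¹ * K * |s| ^ (α + β) := by
  set γ := α + β with hγdef
  have hγ0 : 0 < γ := by simp only [hγdef]; linarith
  have hγ1 : 1 < γ := hαβ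
  set r := (2:ℝ) ^ (1 - γ) with hrdef
  have hr0 : 0 < r := Real.rpow_pos_of_pos two_pos _
  have hr1 : r < 1 := Real.rpow_lt_one_of_one_lt_of_neg one_lt_two (by linarith)
  set c : ℝ → ℕ → ℝ := fun s n => 2 ^ n * a (s / 2 ^ n) with hcdef
  have h2n : ∀ n : ℕ, (0:ℝ) < 2 ^ n := fun n => pow_pos two_pos n
  -- rpow conversion for powers of two
  have hpow : ∀ n : ℕ, ((2:ℝ) ^ n) = (2:ℝ) ^ (n:ℝ) := fun n => (Real.rpow_natCast 2 n).symm
  have hrn : ∀ n : ℕ, r ^ n = (2:ℝ) ^ ((1 - γ) * (n:ℝ)) := by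
    intro n
    rw [hrdef, ← Real.rpow_natCast ((2:ℝ) ^ (1-γ)) n, ← Real.rpow_mul (by norm_num)]
  -- geometric bound
  have geom : ∀ s, ∀ n : ℕ, dist (c s n) (c s (n+1)) ≤ (K * |s| ^ γ) * r ^ n := by
    intro s n
    have hx : s / 2 ^ n = s / 2 ^ (n+1) + s / 2 ^ (n+1) := by
      rw [pow_succ]; ring
    have e : c s n - c s (n+1)
        = 2 ^ n * (a (s / 2 ^ (n+1) + s / 2 ^ (n+1)) - a (s / 2 ^ (n+1)) - a (s / 2 ^ (n+1))) := by
      simp only [hcdef]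
      rw [← hx, pow_succ]; ring
    rw [Real.dist_eq, e, abs_mul, abs_of_pos (h2n n)]
    have hb := hadd (s / 2 ^ (n+1)) (s / 2 ^ (n+1))
    have h1 : (2:ℝ) ^ n * |a (s / 2 ^ (n+1) + s / 2 ^ (n+1)) - a (s / 2 ^ (n+1)) - a (s / 2 ^ (n+1))|
        ≤ 2 ^ n * (K * |s / 2 ^ (n+1)| ^ α * |s / 2 ^ (n+1)| ^ β) :=
      mul_le_mul_of_nonneg_left hb (h2n n).le
    refine h1.trans ?_
    have habs : |s / 2 ^ (n+1)| = |s| / 2 ^ (n+1) := by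
      rw [abs_div, abs_of_pos (h2n (n+1))]
    rw [habs]
    have hsplit : (|s| / 2 ^ (n+1)) ^ α * (|s| / 2 ^ (n+1)) ^ β = (|s| / 2 ^ (n+1)) ^ γ :=
      (Real.rpow_add' (by positivity) (by simp only [hγdef] at *; linarith)).symm
    rw [mul_assoc, hsplit, Real.div_rpow (abs_nonneg s) (h2n (n+1)).le]
    have hred : (2:ℝ) ^ n / ((2:ℝ) ^ (n+1)) ^ γ ≤ r ^ n := by
      rw [hpow n, hpow (n+1), ← Real.rpow_mul (by norm_num : (0:ℝ) ≤ 2),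
        ← Real.rpow_sub two_pos, hrn n]
      apply Real.rpow_le_rpow_of_exponent_le one_le_two
      push_cast
      nlinarith [Nat.cast_nonneg (α := ℝ) n]
    calc (2:ℝ) ^ n * (K * (|s| ^ γ / ((2:ℝ) ^ (n+1)) ^ γ))
        = (K * |s| ^ γ) * ((2:ℝ) ^ n / ((2:ℝ) ^ (n+1)) ^ γ) := by ring
      _ ≤ (K * |s| ^ γ) * r ^ n := by
          apply mul_le_mul_of_nonneg_left hred (by positivity)
  have hconv : ∀ s, ∃ l, Tendsto (c s) atTop (𝓝 l) := fun s =>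
    cauchySeq_tendsto_of_complete (cauchySeq_of_le_geometric r _ hr1 (geom s))
  choose ℓ hℓ using hconv
  have hc0 : ∀ s, c s 0 = a s := by intro s; simp [hcdef]
  have hdist : ∀ s, |a s - ℓ s| ≤ (1 - r)⁻¹ * (K * |s| ^ γ) := by
    intro s
    have := dist_le_of_le_geometric_of_tendsto₀ r (K * |s| ^ γ) hr1 (geom s) (hℓ s)
    rw [hc0 s, Real.dist_eq] at this
    calc |a s - ℓ s| ≤ K * |s| ^ γ / (1 - r) := this
      _ = (1 - r)⁻¹ * (K * |s| ^ γ) := by ring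
  -- additivity
  have hadd' : ∀ u v, ℓ (u + v) = ℓ u + ℓ v := by
    intro u v
    have h1 : Tendsto (fun n => c (u+v) n - c u n - c v n) atTop
        (𝓝 (ℓ (u+v) - ℓ u - ℓ v)) := ((hℓ (u+v)).sub (hℓ u)).sub (hℓ v)
    have h2 : Tendsto (fun n => c (u+v) n - c u n - c v n) atTop (𝓝 0) := by
      apply squeeze_zero_norm (a := fun n => (K * |u| ^ α * |v| ^ β) * r ^ n)
      · intro n
        have e : c (u+v) n - c u n - c v n
            = 2 ^ n * (a (u / 2 ^ n + v / 2 ^ n) - a (u / 2 ^ n) - a (v / 2 ^ n)) := by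
          simp only [hcdef, add_div]; ring
        rw [Real.norm_eq_abs, e, abs_mul, abs_of_pos (h2n n)]
        have hb := hadd (u / 2 ^ n) (v / 2 ^ n)
        have h3 : (2:ℝ) ^ n * |a (u / 2 ^ n + v / 2 ^ n) - a (u / 2 ^ n) - a (v / 2 ^ n)|
            ≤ 2 ^ n * (K * |u / 2 ^ n| ^ α * |v / 2 ^ n| ^ β) :=
          mul_le_mul_of_nonneg_left hb (h2n n).le
        refine h3.trans (le_of_eq ?_)
        have habsu : |u / 2 ^ n| = |u| / 2 ^ n := by rw [abs_div, abs_of_pos (h2n n)]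
        have habsv : |v / 2 ^ n| = |v| / 2 ^ n := by rw [abs_div, abs_of_pos (h2n n)]
        rw [habsu, habsv, Real.div_rpow (abs_nonneg u) (h2n n).le,
          Real.div_rpow (abs_nonneg v) (h2n n).le]
        have e1 : ((2:ℝ) ^ n) ^ α * ((2:ℝ) ^ n) ^ β = ((2:ℝ) ^ n) ^ γ :=
          (Real.rpow_add (h2n n) α β).symm
        have e2 : (2:ℝ) ^ n / ((2:ℝ) ^ n) ^ γ = r ^ n := by
          rw [hpow n, ← Real.rpow_mul (by norm_num : (0:ℝ) ≤ 2),
            ← Real.rpow_sub two_pos, hrn n]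
          congr 1; ring
        have e3 : r ^ n = (2:ℝ) ^ n / (((2:ℝ) ^ n) ^ α * ((2:ℝ) ^ n) ^ β) := by
          rw [e1, ← e2]
        have npα : ((2:ℝ) ^ n) ^ α ≠ 0 := (Real.rpow_pos_of_pos (h2n n) α).ne'
        have npβ : ((2:ℝ) ^ n) ^ β ≠ 0 := (Real.rpow_pos_of_pos (h2n n) β).ne'
        rw [e3]
        field_simp
      · have := (tendsto_pow_atTop_nhds_zero_of_lt_one hr0.le hr1).const_mul
          (K * |u| ^ α * |v| ^ β)
        simpa using this
    have := tendsto_nhds_unique h1 h2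
    linarith
  -- tendsto 0 at 0
  have hℓ0 : Tendsto ℓ (𝓝 0) (𝓝 0) := by
    apply squeeze_zero_norm (a := fun s => |a s| + (1 - r)⁻¹ * (K * |s| ^ γ))
    · intro s
      have h1 := hdist s
      have : |ℓ s| ≤ |a s| + |a s - ℓ s| := by
        have := abs_sub_abs_le_abs_sub (a s) (ℓ s)
        have h2 := abs_sub (a s) (ℓ s)
        calc |ℓ s| = |a s - (a s - ℓ s)| := by ring_nf
          _ ≤ |a s| + |a s - ℓ s| := abs_sub _ _
      rw [Real.norm_eq_abs]
      linarith
    · have h1 : Tendsto (fun s : ℝ => |a s|) (𝓝 0) (𝓝 0) := by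
        simpa using hcont.abs
      have h2 : Tendsto (fun s : ℝ => (1 - r)⁻¹ * (K * |s| ^ γ)) (𝓝 0) (𝓝 0) := by
        have := ((tendsto_abs_rpow_zero hγ0).const_mul K).const_mul (1 - r)⁻¹
        simpa using this
      simpa using h1.add h2
  -- continuity
  have hℓcont : Continuous ℓ := by
    rw [continuous_iff_continuousAt]
    intro x
    have hpt : ∀ y, ℓ x + ℓ (y - x) = ℓ y := by
      intro y
      rw [← hadd']; ring_nf
    have key : Tendsto (fun y => ℓ x + ℓ (y - x)) (𝓝 x) (𝓝 (ℓ x)) := by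
      have h3 : Tendsto (fun y : ℝ => y - x) (𝓝 x) (𝓝 0) := by
        simpa using (show Tendsto (fun y : ℝ => y - x) (𝓝 x) (𝓝 (x - x)) from
          (continuous_id.sub (continuous_const (y := x))).tendsto x)
      simpa using tendsto_const_nhds.add (hℓ0.comp h3)
    exact key.congr hpt
  -- linearity
  have hlin : ∀ s, ℓ s = ℓ 1 * s := by
    intro s
    have hF := ((AddMonoidHom.mk' ℓ hadd').toRealLinearMap hℓcont).map_smul s 1
    have hF2 : ℓ (s • (1:ℝ)) = s • ℓ 1 := by
      have hco := AddMonoidHom.coe_toRealLinearMap (AddMonoidHom.mk' ℓ hadd') hℓcont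
      calc ℓ (s • (1:ℝ)) = ((AddMonoidHom.mk' ℓ hadd').toRealLinearMap hℓcont) (s • (1:ℝ)) := by
            rw [hco]; rfl
        _ = s • ((AddMonoidHom.mk' ℓ hadd').toRealLinearMap hℓcont) (1:ℝ) := hF
        _ = s • ℓ 1 := by rw [hco]; rfl
    simpa [smul_eq_mul, mul_comm] using hF2
  refine ⟨ℓ 1, fun s => ?_⟩
  rw [← hlin s]
  calc |a s - ℓ s| ≤ (1 - r)⁻¹ * (K * |s| ^ γ) := hdist s
    _ = (1 - 2 ^ (1 - (α + β)))⁻¹ * K * |s| ^ (α + β) := by rw [← hγdef, ← hrdef]; ring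

set_option maxHeartbeats 1000000 in
/-- Differentiability of averaged observables along a flow, case `α + β > 1`:
if `f` is `α`-Hölder, `g` is `β`-Hölder and `μ` is invariant under the flow `φ`
of a bounded vector field `X`, then `h(t) = ∫ f(x)·g(φ_t(x)) dμ` is differentiable
everywhere, with `|h′(t)| ≤ C·(sup ‖X‖)·(sup|f| + C_f)·(sup|g| + C_g)`, where `C`
depends only on `α` and `β`. -/
theorem stmt_19 (α β : ℝ) (hα : α ∈ Set.Ioo (0:ℝ) 1) (hβ : β ∈ Set.Ioo (0:ℝ) 1)
    (hαβ : 1 < α + β) :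
    ∃ C : ℝ, 0 < C ∧
      ∀ (d : ℕ) (MX : ℝ) (X : (Fin d → ℝ) → Fin d → ℝ),
        Continuous X → (∀ x, ‖X x‖ ≤ MX) →
      ∀ φ : ℝ → (Fin d → ℝ) → Fin d → ℝ,
        (∀ p, φ 0 p = p) →
        (∀ t p, HasDerivAt (fun s : ℝ => φ s p) (X (φ t p)) t) →
        (∀ t s p, φ (t + s) p = φ t (φ s p)) →
      ∀ μ : Measure (Fin d → ℝ), IsProbabilityMeasure μ →
        (∀ t, Measure.map (φ t) μ = μ) →
      ∀ (f g : (Fin d → ℝ) → ℝ) (Mf Cf Mg Cg : ℝ), 0 ≤ Cf → 0 ≤ Cg →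
        (∀ x, |f x| ≤ Mf) → (∀ x y, |f x - f y| ≤ Cf * dist x y ^ α) →
        (∀ x, |g x| ≤ Mg) → (∀ x y, |g x - g y| ≤ Cg * dist x y ^ β) →
        ∃ h' : ℝ → ℝ,
          ∀ t : ℝ,
            HasDerivAt (fun u => ∫ x, f x * g (φ u x) ∂μ) (h' t) t ∧
            |h' t| ≤ C * MX * (Mf + Cf) * (Mg + Cg) := by
  obtain ⟨hα0, hα1⟩ := hα
  obtain ⟨hβ0, hβ1⟩ := hβ
  have hγ0 : 0 < α + β := by linarith
  have hr0 : (0:ℝ) < 2 ^ (1 - (α + β)) := Real.rpow_pos_of_pos two_pos _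
  have hr1 : (2:ℝ) ^ (1 - (α + β)) < 1 :=
    Real.rpow_lt_one_of_one_lt_of_neg one_lt_two (by linarith)
  set C₀ : ℝ := (1 - 2 ^ (1 - (α + β)))⁻¹ with hC0def
  have hC₀ : 0 < C₀ := inv_pos.2 (by linarith)
  refine ⟨1 + C₀, by linarith, ?_⟩
  intro d MX X hXc hXb φ hφ0 hφd hφg μ hμ hinv f g Mf Cf Mg Cg hCf hCg hMf hfh hMg hgh
  have hMX0 : 0 ≤ MX := le_trans (norm_nonneg _) (hXb 0)
  have hMf0 : 0 ≤ Mf := le_trans (abs_nonneg _) (hMf 0)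
  have hMg0 : 0 ≤ Mg := le_trans (abs_nonneg _) (hMg 0)
  -- continuity of f and g
  have hcont_of_holder : ∀ (F : (Fin d → ℝ) → ℝ) (CC γ : ℝ), 0 < γ →
      (∀ x y, |F x - F y| ≤ CC * dist x y ^ γ) → Continuous F := by
    intro F CC γ hγ hF
    rw [continuous_iff_continuousAt]
    intro x
    rw [ContinuousAt, tendsto_iff_dist_tendsto_zero]
    have hb : ∀ y, dist (F y) (F x) ≤ CC * dist y x ^ γ := fun y => by
      rw [Real.dist_eq]; exact hF y x
    refine squeeze_zero (fun y => dist_nonneg) hb ?_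
    · have h1 : Tendsto (fun y => dist y x) (𝓝 x) (𝓝 0) := by
        simpa using (continuous_id.dist (continuous_const (y := x))).tendsto x
      have h2 : Tendsto (fun z : ℝ => z ^ γ) (𝓝 0) (𝓝 0) := by
        have := Real.continuousAt_rpow_const 0 γ (Or.inr hγ.le)
        rwa [ContinuousAt, Real.zero_rpow hγ.ne'] at this
      simpa using (h2.comp h1).const_mul CC
  have hfc : Continuous f := hcont_of_holder f Cf α hα0 hfh
  have hgc : Continuous g := hcont_of_holder g Cg β hβ0 hgh
  -- a.e. measurability of the flow maps
  have hφae : ∀ t, AEMeasurable (φ t) μ := by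
    intro t
    by_contra hcon
    have h0 : μ = 0 := by rw [← hinv t, Measure.map_of_not_aemeasurable hcon]
    have : (1:ENNReal) = 0 := by rw [← measure_univ (μ := μ), h0]; rfl
    simp at this
  -- flow is Lipschitz in time
  have hlip : ∀ p u v, dist (φ u p) (φ v p) ≤ MX * |u - v| := by
    intro p u v
    have := Convex.norm_image_sub_le_of_norm_hasDerivWithin_le
      (f := fun s : ℝ => φ s p) (f' := fun s : ℝ => X (φ s p)) (s := Set.univ)
      (fun x _ => (hφd x p).hasDerivWithinAt) (fun x _ => hXb _) convex_univ
      (Set.mem_univ v) (Set.mem_univ u)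
    rw [dist_eq_norm]
    simpa [Real.norm_eq_abs] using this
  -- Hölder bounds along the flow
  have hgφ : ∀ (s : ℝ) x, |g (φ s x) - g x| ≤ Cg * (MX * |s|) ^ β := by
    intro s x
    refine (hgh _ _).trans (mul_le_mul_of_nonneg_left ?_ hCg)
    refine Real.rpow_le_rpow dist_nonneg ?_ hβ0.le
    have := hlip x s 0
    rw [hφ0 x] at this
    simpa using this
  have hfφ : ∀ (a b : ℝ) x, |f (φ a x) - f (φ b x)| ≤ Cf * (MX * |a - b|) ^ α := by
    intro a b x
    refine (hfh _ _).trans (mul_le_mul_of_nonneg_left ?_ hCf)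
    exact Real.rpow_le_rpow dist_nonneg (hlip x a b) hα0.le
  -- integrability
  have hmeasφ : ∀ (u : ℝ) (F : (Fin d → ℝ) → ℝ), Continuous F →
      AEMeasurable (fun x => F (φ u x)) μ := fun u F hF => hF.measurable.comp_aemeasurable (hφae u)
  have hint1 : ∀ (t s : ℝ), Integrable (fun x => f (φ t x) * (g (φ s x) - g x)) μ := by
    intro t s
    refine Integrable.mono' (integrable_const (Mf * (Mg + Mg)))
      ((hmeasφ t f hfc).mul ((hmeasφ s g hgc).sub hgc.aemeasurable)).aestronglyMeasurable
      (Filter.Eventually.of_forall fun x => ?_)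
    rw [Real.norm_eq_abs, abs_mul]
    apply mul_le_mul (hMf _) ((abs_sub _ _).trans (add_le_add (hMg _) (hMg _)))
      (abs_nonneg _) hMf0
  have hint2 : ∀ (t s : ℝ), Integrable (fun x => f (φ t x) * g (φ s x)) μ := by
    intro t s
    refine Integrable.mono' (integrable_const (Mf * Mg))
      ((hmeasφ t f hfc).mul (hmeasφ s g hgc)).aestronglyMeasurable
      (Filter.Eventually.of_forall fun x => ?_)
    rw [Real.norm_eq_abs, abs_mul]
    exact mul_le_mul (hMf _) (hMg _) (abs_nonneg _) hMf0
  have hint3 : ∀ (t : ℝ), Integrable (fun x => f (φ t x) * g x) μ := by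
    intro t
    refine Integrable.mono' (integrable_const (Mf * Mg))
      ((hmeasφ t f hfc).mul hgc.aemeasurable).aestronglyMeasurable
      (Filter.Eventually.of_forall fun x => ?_)
    rw [Real.norm_eq_abs, abs_mul]
    exact mul_le_mul (hMf _) (hMg _) (abs_nonneg _) hMf0
  -- change of variables
  have hkey : ∀ t s : ℝ, ∫ x, f (φ (-t) x) * g (φ s x) ∂μ = ∫ x, f x * g (φ (t+s) x) ∂μ := by
    intro t s
    have hmeas : AEStronglyMeasurable (fun x => f (φ (-t) x) * g (φ s x))
        (Measure.map (φ t) μ) := by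
      rw [hinv t]
      exact ((hmeasφ (-t) f hfc).mul (hmeasφ s g hgc)).aestronglyMeasurable
    calc ∫ x, f (φ (-t) x) * g (φ s x) ∂μ
        = ∫ x, f (φ (-t) x) * g (φ s x) ∂(Measure.map (φ t) μ) := by rw [hinv t]
      _ = ∫ x, f (φ (-t) (φ t x)) * g (φ s (φ t x)) ∂μ := integral_map (hφae t) hmeas
      _ = ∫ x, f x * g (φ (t+s) x) ∂μ := by
          apply integral_congr_ae
          apply Filter.Eventually.of_forall
          intro x
          have e1 : φ (-t) (φ t x) = x := by
            rw [← hφg (-t) t x, neg_add_cancel, hφ0]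
          have e2 : φ s (φ t x) = φ (t+s) x := by
            rw [← hφg s t x, add_comm]
          simp only [e1, e2]
  -- the increment function
  set ψ : ℝ → ℝ → ℝ := fun t s => ∫ x, f (φ (-t) x) * (g (φ s x) - g x) ∂μ with hψdef
  have hψ : ∀ t s : ℝ, ψ t s
      = (∫ x, f x * g (φ (t+s) x) ∂μ) - ∫ x, f x * g (φ t x) ∂μ := by
    intro t s
    have e : ψ t s = (∫ x, f (φ (-t) x) * g (φ s x) ∂μ) - ∫ x, f (φ (-t) x) * g x ∂μ := by
      rw [hψdef, ← integral_sub (hint2 (-t) s) (hint3 (-t))]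
      apply integral_congr_ae
      apply Filter.Eventually.of_forall
      intro x
      ring
    have e2 : ∫ x, f (φ (-t) x) * g x ∂μ = ∫ x, f x * g (φ t x) ∂μ := by
      have e3 : ∫ x, f (φ (-t) x) * g x ∂μ = ∫ x, f (φ (-t) x) * g (φ 0 x) ∂μ := by
        apply integral_congr_ae
        apply Filter.Eventually.of_forall
        intro x
        simp only [hφ0]
      rw [e3, hkey t 0, add_zero]
    rw [e, e2, hkey t s]
  -- bound on ψ
  have hψb : ∀ t s : ℝ, |ψ t s| ≤ Mf * (Cg * (MX * |s|) ^ β) := by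
    intro t s
    have := norm_integral_le_of_norm_le_const (μ := μ)
      (f := fun x => f (φ (-t) x) * (g (φ s x) - g x))
      (C := Mf * (Cg * (MX * |s|) ^ β))
      (Filter.Eventually.of_forall fun x => by
        rw [Real.norm_eq_abs, abs_mul]
        exact mul_le_mul (hMf _) (hgφ s x) (abs_nonneg _) hMf0)
    rw [Real.norm_eq_abs] at this
    simpa using this
  -- difference bound on ψ
  have hψd : ∀ t u v : ℝ, |ψ (t+u) v - ψ t v|
      ≤ Cf * (MX * |u|) ^ α * (Cg * (MX * |v|) ^ β) := by
    intro t u v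
    have e : ψ (t+u) v - ψ t v
        = ∫ x, (f (φ (-(t+u)) x) - f (φ (-t) x)) * (g (φ v x) - g x) ∂μ := by
      rw [hψdef, ← integral_sub (hint1 (-(t+u)) v) (hint1 (-t) v)]
      apply integral_congr_ae
      apply Filter.Eventually.of_forall
      intro x
      ring
    rw [e]
    have := norm_integral_le_of_norm_le_const (μ := μ)
      (f := fun x => (f (φ (-(t+u)) x) - f (φ (-t) x)) * (g (φ v x) - g x))
      (C := Cf * (MX * |u|) ^ α * (Cg * (MX * |v|) ^ β))
      (Filter.Eventually.of_forall fun x => by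
        rw [Real.norm_eq_abs, abs_mul]
        have h1 : |f (φ (-(t+u)) x) - f (φ (-t) x)| ≤ Cf * (MX * |u|) ^ α := by
          have := hfφ (-(t+u)) (-t) x
          have e4 : |-(t+u) - -t| = |u| := by
            rw [show -(t+u) - -t = -u by ring, abs_neg]
          rwa [e4] at this
        exact mul_le_mul h1 (hgφ v x) (abs_nonneg _) (by positivity))
    rw [Real.norm_eq_abs] at this
    simpa using this
  -- main pointwise statement
  have main : ∀ t : ℝ, ∃ L : ℝ,
      HasDerivAt (fun u => ∫ x, f x * g (φ u x) ∂μ) L t ∧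
      |L| ≤ (1 + C₀) * MX * (Mf + Cf) * (Mg + Cg) := by
    intro t
    set K : ℝ := Cf * MX ^ α * (Cg * MX ^ β) with hKdef
    have hK0 : 0 ≤ K := by
      have := Real.rpow_nonneg hMX0 α
      have := Real.rpow_nonneg hMX0 β
      positivity
    set a : ℝ → ℝ := fun s => ψ t s with hadef
    have hprod : ∀ u v : ℝ, Cf * (MX * |u|) ^ α * (Cg * (MX * |v|) ^ β)
        = K * |u| ^ α * |v| ^ β := by
      intro u v
      rw [Real.mul_rpow hMX0 (abs_nonneg u), Real.mul_rpow hMX0 (abs_nonneg v), hKdef]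
      ring
    have hadd : ∀ u v, |a (u + v) - a u - a v| ≤ K * |u| ^ α * |v| ^ β := by
      intro u v
      have e : a (u+v) - a u - a v = ψ (t+u) v - ψ t v := by
        have h1 := hψ t (u+v)
        have h2 := hψ t u
        have h3 := hψ t v
        have h4 := hψ (t+u) v
        rw [show t + u + v = t + (u + v) from by ring] at h4
        simp only [hadef]
        rw [h1, h2, h3, h4]
        ring
      rw [e, ← hprod u v]
      exact hψd t u v
    have hcont : Tendsto a (𝓝 0) (𝓝 0) := by
      apply squeeze_zero_norm (a := fun s : ℝ => Mf * (Cg * (MX * |s|) ^ β))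
      · intro s
        rw [Real.norm_eq_abs]
        exact hψb t s
      · have h1 : Tendsto (fun s : ℝ => MX * |s|) (𝓝 0) (𝓝 0) := by
          have : Tendsto (fun s : ℝ => |s|) (𝓝 0) (𝓝 (0:ℝ)) := by
            simpa using continuous_abs.tendsto (0:ℝ)
          simpa using this.const_mul MX
        have h2 : Tendsto (fun z : ℝ => z ^ β) (𝓝 0) (𝓝 0) := by
          have := Real.continuousAt_rpow_const 0 β (Or.inr hβ0.le)
          rwa [ContinuousAt, Real.zero_rpow hβ0.ne'] at this
        have := ((h2.comp h1).const_mul Cg).const_mul Mf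
        simpa using this
    obtain ⟨L, hL⟩ := approx_linear hα0 hβ0 hαβ hK0 a hadd hcont
    have hL' : ∀ s : ℝ, |a s - L * s| ≤ C₀ * K * |s| ^ (α + β) := fun s => hL s
    refine ⟨L, ?_, ?_⟩
    · -- differentiability
      rw [hasDerivAt_iff_tendsto_slope]
      rw [← tendsto_sub_nhds_zero_iff]
      apply squeeze_zero_norm' (a := fun x : ℝ => C₀ * K * |x - t| ^ (α + β - 1))
      · filter_upwards [self_mem_nhdsWithin] with x hx
        have hxt : x - t ≠ 0 := sub_ne_zero.2 hx
        have hslope : slope (fun u => ∫ y, f y * g (φ u y) ∂μ) t x - L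
            = (a (x - t) - L * (x - t)) / (x - t) := by
          rw [slope_def_field]
          simp only [hadef]
          rw [hψ t (x - t), add_sub_cancel]
          field_simp
        rw [Real.norm_eq_abs, hslope, abs_div]
        rw [div_le_iff₀ (abs_pos.2 hxt)]
        calc |a (x - t) - L * (x - t)| ≤ C₀ * K * |x - t| ^ (α + β) := hL' (x - t)
          _ = C₀ * K * |x - t| ^ (α + β - 1) * |x - t| := by
              rw [Real.rpow_sub_one (abs_ne_zero.2 hxt)]
              field_simp
      · have h1 : Tendsto (fun x : ℝ => |x - t|) (𝓝[≠] t) (𝓝 0) := by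
          apply Tendsto.mono_left ?_ nhdsWithin_le_nhds
          have : Tendsto (fun x : ℝ => x - t) (𝓝 t) (𝓝 0) := by
            simpa using (show Tendsto (fun x : ℝ => x - t) (𝓝 t) (𝓝 (t - t)) from
              (continuous_id.sub (continuous_const (y := t))).tendsto t)
          simpa using this.abs
        have h2 : Tendsto (fun z : ℝ => z ^ (α + β - 1)) (𝓝 0) (𝓝 0) := by
          have := Real.continuousAt_rpow_const 0 (α + β - 1) (Or.inr (by linarith))
          rwa [ContinuousAt, Real.zero_rpow (by linarith : α + β - 1 ≠ 0)] at this
        have := (h2.comp h1).const_mul (C₀ * K)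
        simpa using this
    · -- the bound
      rcases eq_or_lt_of_le hMX0 with hMX | hMX
      · -- MX = 0
        have hK : K = 0 := by
          rw [hKdef, ← hMX, Real.zero_rpow hα0.ne', Real.zero_rpow hβ0.ne']
          ring
        have ha1 : |a 1| ≤ 0 := by
          have := hψb t 1
          rw [← hMX] at this
          simpa [Real.zero_rpow hβ0.ne'] using this
        have h1 := hL' 1
        rw [hK] at h1
        simp only [mul_zero, zero_mul, mul_one] at h1
        have : |L| ≤ |a 1| + |a 1 - L| := by
          calc |L| = |a 1 - (a 1 - L)| := by ring_nf
            _ ≤ |a 1| + |a 1 - L| := abs_sub _ _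
        rw [← hMX]
        have hb : (1 + C₀) * 0 * (Mf + Cf) * (Mg + Cg) = 0 := by ring
        rw [hb]
        linarith
      · -- 0 < MX
        have hs0 : (0:ℝ) < MX⁻¹ := inv_pos.2 hMX
        have habs : |MX⁻¹| = MX⁻¹ := abs_of_pos hs0
        have hMXs : MX * MX⁻¹ = 1 := mul_inv_cancel₀ hMX.ne'
        have ha : |a MX⁻¹| ≤ Mf * Cg := by
          have := hψb t MX⁻¹
          rw [habs, hMXs, Real.one_rpow, mul_one] at this
          exact this
        have hKeq : K = Cf * Cg * MX ^ (α + β) := by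
          rw [hKdef, Real.rpow_add hMX]; ring
        have hKs : K * |MX⁻¹| ^ (α + β) = Cf * Cg := by
          rw [habs, hKeq, Real.inv_rpow hMX0]
          have hpos : (0:ℝ) < MX ^ (α + β) := Real.rpow_pos_of_pos hMX _
          field_simp
        have h1 := hL' MX⁻¹
        rw [mul_assoc, hKs] at h1
        have h2 : |L| * MX⁻¹ ≤ Mf * Cg + C₀ * (Cf * Cg) := by
          have h3 : |L * MX⁻¹| ≤ |a MX⁻¹| + |a MX⁻¹ - L * MX⁻¹| := by
            calc |L * MX⁻¹| = |a MX⁻¹ - (a MX⁻¹ - L * MX⁻¹)| := by ring_nf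
              _ ≤ |a MX⁻¹| + |a MX⁻¹ - L * MX⁻¹| := abs_sub _ _
          rw [abs_mul, habs] at h3
          linarith
        have h4 : |L| ≤ (Mf * Cg + C₀ * (Cf * Cg)) * MX := by
          have := mul_le_mul_of_nonneg_right h2 hMX.le
          rwa [mul_assoc, inv_mul_cancel₀ hMX.ne', mul_one] at this
        refine h4.trans ?_
        have e1 : Mf * Cg ≤ (Mf + Cf) * (Mg + Cg) := by nlinarith
        have e2 : Cf * Cg ≤ (Mf + Cf) * (Mg + Cg) := by nlinarith
        have e3 : Mf * Cg + C₀ * (Cf * Cg) ≤ (1 + C₀) * ((Mf + Cf) * (Mg + Cg)) := by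
          have := mul_le_mul_of_nonneg_left e2 hC₀.le
          nlinarith
        calc (Mf * Cg + C₀ * (Cf * Cg)) * MX
            ≤ ((1 + C₀) * ((Mf + Cf) * (Mg + Cg))) * MX :=
              mul_le_mul_of_nonneg_right e3 hMX.le
          _ = (1 + C₀) * MX * (Mf + Cf) * (Mg + Cg) := by ring
  choose h' hh' using main
  exact ⟨h', hh'⟩
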